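/- Let a, b ≥ 1 be natural numbers and set g = a·b. Let T be the set of bijections f : Fin a × Fin b → Fin g that are strictly increasing in each coordinate, i.e., f(i,j) < f(i',j) whenever i < i' and f(i,j) < f(i,j') whenever j < j' (these are the standard Young tableaux on the a × b rectangular Young diagram). Then the cardinality of T satisfies |T| · ∏_{α=0}^{a−1} (b+α)! = g! · ∏_{α=0}^{a−1} α!. -/

import Mathlib

open Finset

namespace SYTAux
open Nat

variable {a n g : ℕ}

def content (w : Fin n → Fin a) (i : Fin a) : ℕ :=
  (univ.filter fun s => w s = i).card

def cnt (w : Fin g → Fin a) (t : ℕ) (i : Fin a) : ℕ :=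
  (univ.filter fun s : Fin g => s.val < t ∧ w s = i).card

def sufc (w : Fin g → Fin a) (t : ℕ) (i : Fin a) : ℕ :=
  (univ.filter fun s : Fin g => t ≤ s.val ∧ w s = i).card

lemma content_eq_cnt_add_sufc (w : Fin g → Fin a) (t : ℕ) (i : Fin a) :
    content w i = cnt w t i + sufc w t i := by
  unfold content cnt sufc
  rw [Finset.card_filter, Finset.card_filter, Finset.card_filter, ← Finset.sum_add_distrib]
  apply Finset.sum_congr rfl
  intro s _
  by_cases hw : w s = i
  · simp only [hw, and_true]
    split_ifs <;> omega
  · simp [hw]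

def pos (σ : Equiv.Perm (Fin a)) (w : Fin g → Fin a) (t : ℕ) (i : Fin a) : ℤ :=
  (a : ℤ) - 1 - (σ i : ℤ) + cnt w t i

def Good (σ : Equiv.Perm (Fin a)) (w : Fin g → Fin a) : Prop :=
  ∀ t : Fin (g+1), Function.Injective (pos σ w t.val)

def Econd (b : ℕ) (σ : Equiv.Perm (Fin a)) (w : Fin g → Fin a) : Prop :=
  ∀ i : Fin a, (content w i : ℤ) = (b : ℤ) + (σ i : ℤ) - (i : ℤ)

/-- reflection of a word: apply `τ` to all letters strictly before time `t₀`. -/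
def reflW (τ : Equiv.Perm (Fin a)) (t₀ : ℕ) (w : Fin g → Fin a) : Fin g → Fin a :=
  fun s => if s.val < t₀ then τ (w s) else w s

lemma cnt_reflW (τ : Equiv.Perm (Fin a)) (t₀ : ℕ) (w : Fin g → Fin a)
    {s : ℕ} (hs : s ≤ t₀) (i : Fin a) :
    cnt (reflW τ t₀ w) s i = cnt w s (τ⁻¹ i) := by
  unfold cnt
  congr 1
  apply Finset.filter_congr
  intro r _
  constructor
  · rintro ⟨h1, h2⟩
    refine ⟨h1, ?_⟩
    rw [reflW, if_pos (by omega)] at h2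
    rw [← h2]
    simp
  · rintro ⟨h1, h2⟩
    refine ⟨h1, ?_⟩
    rw [reflW, if_pos (by omega), h2]
    simp

lemma sufc_reflW (τ : Equiv.Perm (Fin a)) (t₀ : ℕ) (w : Fin g → Fin a) (i : Fin a) :
    sufc (reflW τ t₀ w) t₀ i = sufc w t₀ i := by
  unfold sufc
  congr 1
  apply Finset.filter_congr
  intro r _
  constructor <;> rintro ⟨h1, h2⟩ <;> refine ⟨h1, ?_⟩ <;>
    rw [reflW, if_neg (by omega)] at * <;> exact h2

section BadData

variable {σ : Equiv.Perm (Fin a)} {w : Fin g → Fin a}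

lemma exists_noninj (hbad : ¬ Good σ w) :
    ∃ t : ℕ, ¬ Function.Injective (pos σ w t) := by
  rw [Good, not_forall] at hbad
  obtain ⟨t, ht⟩ := hbad
  exact ⟨t.val, ht⟩

open scoped Classical in
noncomputable def fT (σ : Equiv.Perm (Fin a)) (w : Fin g → Fin a) : ℕ :=
  if H : ∃ t : ℕ, ¬ Function.Injective (pos σ w t) then Nat.find H else 0

lemma fT_noninj (hbad : ¬ Good σ w) : ¬ Function.Injective (pos σ w (fT σ w)) := by
  classical
  rw [fT, dif_pos (exists_noninj hbad)]
  exact Nat.find_spec (exists_noninj hbad)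

lemma fT_min {s : ℕ} (hs : s < fT σ w) : Function.Injective (pos σ w s) := by
  classical
  by_cases H : ∃ t : ℕ, ¬ Function.Injective (pos σ w t)
  · rw [fT, dif_pos H] at hs
    have := Nat.find_min H hs
    tauto
  · rw [fT, dif_neg H] at hs
    omega

lemma pos_zero_injective (σ : Equiv.Perm (Fin a)) (w : Fin g → Fin a) :
    Function.Injective (pos σ w 0) := by
  intro i j hij
  unfold pos cnt at hij
  simp only [Nat.not_lt_zero, false_and, Finset.filter_false, Finset.card_empty] at hij
  have : (σ i : ℤ) = (σ j : ℤ) := by omega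
  exact σ.injective (Fin.ext (by exact_mod_cast this))

lemma fT_pos (hbad : ¬ Good σ w) : 0 < fT σ w := by
  rcases Nat.eq_zero_or_pos (fT σ w) with h | h
  · exact absurd (h ▸ pos_zero_injective σ w) (fT_noninj hbad)
  · exact h

lemma cnt_ge (w : Fin g → Fin a) {t : ℕ} (ht : g ≤ t) (i : Fin a) :
    cnt w t i = cnt w g i := by
  unfold cnt
  congr 1
  apply Finset.filter_congr
  intro s _
  have := s.isLt
  constructor <;> rintro ⟨h1, h2⟩ <;> exact ⟨by omega, h2⟩

lemma pos_of_ge (σ : Equiv.Perm (Fin a)) (w : Fin g → Fin a) {t : ℕ} (ht : g ≤ t) :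
    pos σ w t = pos σ w g := by
  funext i
  unfold pos
  rw [cnt_ge w ht]

lemma fT_le (hbad : ¬ Good σ w) : fT σ w ≤ g := by
  by_contra h
  have h1 : Function.Injective (pos σ w g) := fT_min (by omega)
  have := fT_noninj hbad
  rw [pos_of_ge σ w (by omega : g ≤ fT σ w)] at this
  exact this h1

lemma fT_sub_lt (hbad : ¬ Good σ w) : fT σ w - 1 < g := by
  have := fT_pos hbad; have := fT_le hbad; omega

noncomputable def fK (hbad : ¬ Good σ w) : Fin a := w ⟨fT σ w - 1, fT_sub_lt hbad⟩

lemma cnt_succ' (w : Fin g → Fin a) {t : ℕ} (ht : t < g) (i : Fin a) :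
    cnt w (t+1) i = cnt w t i + if w ⟨t, ht⟩ = i then 1 else 0 := by
  unfold cnt
  rw [Finset.card_filter, Finset.card_filter]
  have key : ∀ s : Fin g, (if (s.val < t+1 ∧ w s = i) then (1:ℕ) else 0)
      = (if (s.val < t ∧ w s = i) then 1 else 0)
      + (if (s = ⟨t,ht⟩ ∧ w s = i) then 1 else 0) := by
    intro s
    have hs : s = ⟨t, ht⟩ ↔ s.val = t := by rw [Fin.ext_iff]
    by_cases hw : w s = i
    · simp only [hw, and_true, hs]
      split_ifs <;> omega
    · simp [hw]
  rw [Finset.sum_congr rfl (fun s _ => key s), Finset.sum_add_distrib]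
  congr 1
  rw [Finset.sum_eq_single (⟨t, ht⟩ : Fin g)]
  · simp
  · intro s _ hne
    simp [hne]
  · intro h
    exact absurd (mem_univ _) h

lemma pos_fT (hbad : ¬ Good σ w) (i : Fin a) :
    pos σ w (fT σ w) i = pos σ w (fT σ w - 1) i + if fK hbad = i then 1 else 0 := by
  have h1 : fT σ w = (fT σ w - 1) + 1 := by have := fT_pos hbad; omega
  unfold pos
  rw [show cnt w (fT σ w) i = cnt w ((fT σ w - 1) + 1) i by rw [← h1],
    cnt_succ' w (fT_sub_lt hbad)]
  have hite : (if w ⟨fT σ w - 1, fT_sub_lt hbad⟩ = i then (1:ℕ) else 0)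
      = (if fK hbad = i then 1 else 0) := rfl
  rw [hite]
  push_cast
  split_ifs <;> ring

lemma exu (hbad : ¬ Good σ w) :
    ∃! j : Fin a, j ≠ fK hbad ∧ pos σ w (fT σ w) j = pos σ w (fT σ w) (fK hbad) := by
  have hprev : Function.Injective (pos σ w (fT σ w - 1)) :=
    fT_min (by have := fT_pos hbad; omega)
  have hnon := fT_noninj hbad
  rw [Function.not_injective_iff] at hnon
  obtain ⟨x, y, hxy, hne⟩ := hnon
  -- one of x, y must be fK
  have hx : x = fK hbad ∨ y = fK hbad := by
    by_contra hc
    push_neg at hc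
    have h1 := pos_fT hbad x
    have h2 := pos_fT hbad y
    rw [if_neg (fun h => hc.1 h.symm)] at h1
    rw [if_neg (fun h => hc.2 h.symm)] at h2
    exact hne (hprev (by omega))
  obtain ⟨j, hj1, hj2⟩ : ∃ j : Fin a, j ≠ fK hbad ∧
      pos σ w (fT σ w) j = pos σ w (fT σ w) (fK hbad) := by
    rcases hx with h | h
    · exact ⟨y, fun hy => hne (h.trans hy.symm), by rw [← h, ← hxy]⟩
    · exact ⟨x, fun hxk => hne (hxk.trans h.symm), by rw [← h, hxy]⟩
  refine ⟨j, ⟨hj1, hj2⟩, ?_⟩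
  rintro j' ⟨hj1', hj2'⟩
  -- both j and j' differ from fK and have the same pos at fT; use injectivity at fT - 1
  have e1 := pos_fT hbad j
  have e2 := pos_fT hbad j'
  rw [if_neg (fun h => hj1 h.symm)] at e1
  rw [if_neg (fun h => hj1' h.symm)] at e2
  exact hprev (by omega)

noncomputable def fJ (hbad : ¬ Good σ w) : Fin a :=
  Fintype.choose _ (exu hbad)

lemma fJ_spec (hbad : ¬ Good σ w) :
    fJ hbad ≠ fK hbad ∧ pos σ w (fT σ w) (fJ hbad) = pos σ w (fT σ w) (fK hbad) :=
  Fintype.choose_spec _ (exu hbad)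

lemma fJ_unique (hbad : ¬ Good σ w) {x : Fin a}
    (hx : x ≠ fK hbad ∧ pos σ w (fT σ w) x = pos σ w (fT σ w) (fK hbad)) :
    x = fJ hbad :=
  (exu hbad).unique hx (fJ_spec hbad)

noncomputable def fTau (hbad : ¬ Good σ w) : Equiv.Perm (Fin a) :=
  Equiv.swap (fK hbad) (fJ hbad)

end BadData



section Reflect

variable {b : ℕ} {σ : Equiv.Perm (Fin a)} {w : Fin g → Fin a}

lemma fTau_inv (hbad : ¬ Good σ w) : (fTau hbad)⁻¹ = fTau hbad := Equiv.swap_inv _ _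

lemma fTau_apply_K (hbad : ¬ Good σ w) : fTau hbad (fK hbad) = fJ hbad :=
  Equiv.swap_apply_left _ _

lemma fTau_apply_J (hbad : ¬ Good σ w) : fTau hbad (fJ hbad) = fK hbad :=
  Equiv.swap_apply_right _ _

lemma fTau_apply_other (hbad : ¬ Good σ w) {i : Fin a} (h1 : i ≠ fK hbad)
    (h2 : i ≠ fJ hbad) : fTau hbad i = i :=
  Equiv.swap_apply_of_ne_of_ne h1 h2

lemma pos_reflW (hbad : ¬ Good σ w) {s : ℕ} (hs : s ≤ fT σ w) (i : Fin a) :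
    pos (σ * fTau hbad) (reflW (fTau hbad) (fT σ w) w) s i = pos σ w s (fTau hbad i) := by
  unfold pos
  rw [cnt_reflW _ _ _ hs, fTau_inv hbad, Equiv.Perm.mul_apply]

lemma noninj_reflW (hbad : ¬ Good σ w) :
    ¬ Function.Injective (pos (σ * fTau hbad) (reflW (fTau hbad) (fT σ w) w) (fT σ w)) := by
  intro hinj
  have e1 : pos (σ * fTau hbad) (reflW (fTau hbad) (fT σ w) w) (fT σ w) (fJ hbad)
      = pos σ w (fT σ w) (fK hbad) := by
    rw [pos_reflW hbad le_rfl, fTau_apply_J hbad]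
  have e2 : pos (σ * fTau hbad) (reflW (fTau hbad) (fT σ w) w) (fT σ w) (fK hbad)
      = pos σ w (fT σ w) (fJ hbad) := by
    rw [pos_reflW hbad le_rfl, fTau_apply_K hbad]
  have : fJ hbad = fK hbad := hinj (by rw [e1, e2, (fJ_spec hbad).2])
  exact (fJ_spec hbad).1 this

lemma bad_reflW (hbad : ¬ Good σ w) :
    ¬ Good (σ * fTau hbad) (reflW (fTau hbad) (fT σ w) w) := by
  intro hgood
  exact noninj_reflW hbad (hgood ⟨fT σ w, by have := fT_le hbad; omega⟩)

lemma fT_reflW (hbad : ¬ Good σ w) :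
    fT (σ * fTau hbad) (reflW (fTau hbad) (fT σ w) w) = fT σ w := by
  have hbad' := bad_reflW hbad
  rcases Nat.lt_trichotomy (fT (σ * fTau hbad) (reflW (fTau hbad) (fT σ w) w)) (fT σ w)
    with h | h | h
  · exfalso
    apply fT_noninj hbad'
    have hfun : pos (σ * fTau hbad) (reflW (fTau hbad) (fT σ w) w)
        (fT (σ * fTau hbad) (reflW (fTau hbad) (fT σ w) w))
        = (pos σ w (fT (σ * fTau hbad) (reflW (fTau hbad) (fT σ w) w))) ∘ (fTau hbad) := by
      funext i
      exact pos_reflW hbad (by omega) i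
    rw [hfun]
    exact (fT_min h).comp (fTau hbad).injective
  · exact h
  · exact absurd (fT_min h) (noninj_reflW hbad)

lemma fK_reflW (hbad : ¬ Good σ w) : fK (bad_reflW hbad) = fJ hbad := by
  unfold fK
  have hidx : (⟨fT (σ * fTau hbad) (reflW (fTau hbad) (fT σ w) w) - 1,
      fT_sub_lt (bad_reflW hbad)⟩ : Fin g) = ⟨fT σ w - 1, fT_sub_lt hbad⟩ :=
    Fin.ext (by
      show fT (σ * fTau hbad) (reflW (fTau hbad) (fT σ w) w) - 1 = fT σ w - 1
      rw [fT_reflW hbad])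
  rw [hidx]
  have hlt : (⟨fT σ w - 1, fT_sub_lt hbad⟩ : Fin g).val < fT σ w := by
    have := fT_pos hbad
    simp
    omega
  show (if (⟨fT σ w - 1, fT_sub_lt hbad⟩ : Fin g).val < fT σ w
      then fTau hbad (w ⟨fT σ w - 1, fT_sub_lt hbad⟩)
      else w ⟨fT σ w - 1, fT_sub_lt hbad⟩) = fJ hbad
  rw [if_pos hlt]
  exact fTau_apply_K hbad

lemma fJ_reflW (hbad : ¬ Good σ w) : fJ (bad_reflW hbad) = fK hbad := by
  have h := fJ_unique (bad_reflW hbad) (x := fK hbad) ?_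
  · exact h.symm
  constructor
  · rw [fK_reflW hbad]
    exact fun hc => (fJ_spec hbad).1 hc.symm
  · rw [fK_reflW hbad, fT_reflW hbad]
    rw [pos_reflW hbad le_rfl, pos_reflW hbad le_rfl, fTau_apply_K hbad, fTau_apply_J hbad]
    exact (fJ_spec hbad).2

lemma fTau_reflW (hbad : ¬ Good σ w) : fTau (bad_reflW hbad) = fTau hbad := by
  unfold fTau
  exact (congrArg₂ Equiv.swap (fK_reflW hbad) (fJ_reflW hbad)).trans (Equiv.swap_comm _ _)

lemma perm_reflW (hbad : ¬ Good σ w) :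
    (σ * fTau hbad) * fTau (bad_reflW hbad) = σ := by
  rw [fTau_reflW hbad, mul_assoc]
  unfold fTau
  rw [Equiv.swap_mul_self, mul_one]

lemma word_reflW (hbad : ¬ Good σ w) :
    reflW (fTau (bad_reflW hbad)) (fT (σ * fTau hbad) (reflW (fTau hbad) (fT σ w) w))
      (reflW (fTau hbad) (fT σ w) w) = w := by
  rw [fTau_reflW hbad, fT_reflW hbad]
  funext s
  unfold reflW fTau
  by_cases h : s.val < fT σ w <;> simp [h, Equiv.swap_apply_self]

lemma Econd_reflW (hE : Econd b σ w) (hbad : ¬ Good σ w) :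
    Econd b (σ * fTau hbad) (reflW (fTau hbad) (fT σ w) w) := by
  intro i
  have hcnt : cnt (reflW (fTau hbad) (fT σ w) w) (fT σ w) i = cnt w (fT σ w) (fTau hbad i) := by
    rw [cnt_reflW _ _ _ le_rfl, fTau_inv hbad]
  have hsplit' := content_eq_cnt_add_sufc (reflW (fTau hbad) (fT σ w) w) (fT σ w) i
  rw [hcnt, sufc_reflW] at hsplit'
  have happ : (((σ * fTau hbad) i : Fin a) : ℤ) = ((σ (fTau hbad i) : Fin a) : ℤ) := by
    rw [Equiv.Perm.mul_apply]
  have hcol := (fJ_spec hbad).2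
  unfold pos at hcol
  by_cases hik : i = fK hbad
  · subst hik
    rw [fTau_apply_K hbad] at hsplit' happ
    have h1 := hE (fK hbad)
    have h3 := content_eq_cnt_add_sufc w (fT σ w) (fK hbad)
    rw [hsplit', happ]
    push_cast at *
    omega
  · by_cases hij : i = fJ hbad
    · subst hij
      rw [fTau_apply_J hbad] at hsplit' happ
      have h1 := hE (fJ hbad)
      have h2 := hE (fK hbad)
      have h3 := content_eq_cnt_add_sufc w (fT σ w) (fJ hbad)
      have h4 := content_eq_cnt_add_sufc w (fT σ w) (fK hbad)
      rw [hsplit', happ]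
      push_cast at *
      omega
    · rw [fTau_apply_other hbad hik hij] at hsplit' happ
      have h1 := hE i
      have h3 := content_eq_cnt_add_sufc w (fT σ w) i
      rw [hsplit', happ]
      push_cast at *
      omega

end Reflect

section Order

variable {b : ℕ} {σ : Equiv.Perm (Fin a)} {w : Fin g → Fin a}

lemma cnt_zero (w : Fin g → Fin a) (i : Fin a) : cnt w 0 i = 0 := by
  simp [cnt]

lemma pos_succ (σ : Equiv.Perm (Fin a)) (w : Fin g → Fin a) {t : ℕ} (ht : t < g) (i : Fin a) :
    pos σ w (t+1) i = pos σ w t i + if w ⟨t, ht⟩ = i then 1 else 0 := by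
  unfold pos
  rw [cnt_succ' w ht]
  push_cast
  split_ifs <;> ring

lemma pos_succ_ge (σ : Equiv.Perm (Fin a)) (w : Fin g → Fin a) {t : ℕ} (ht : g ≤ t) (i : Fin a) :
    pos σ w (t+1) i = pos σ w t i := by
  unfold pos
  rw [cnt_ge w ht, cnt_ge w (by omega : g ≤ t + 1)]

lemma pos_order (hGood : Good σ w)
    {i j : Fin a} (h0 : pos σ w 0 j < pos σ w 0 i) :
    ∀ t ≤ g, pos σ w t j < pos σ w t i := by
  intro t ht
  induction t with
  | zero => exact h0
  | succ t IH =>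
    have ht' : t ≤ g := by omega
    have hlt : pos σ w t j < pos σ w t i := IH ht'
    have hne : pos σ w (t+1) j ≠ pos σ w (t+1) i := by
      intro hcontra
      have hinj := hGood ⟨t+1, by omega⟩
      have : j = i := hinj hcontra
      subst this
      omega
    rcases Nat.lt_or_ge t g with hg | hg
    · rw [pos_succ σ w hg, pos_succ σ w hg] at *
      split_ifs at hne ⊢ <;> omega
    · rw [pos_succ_ge σ w hg, pos_succ_ge σ w hg]
      rw [pos_succ_ge σ w hg, pos_succ_ge σ w hg] at hne
      omega

lemma exists_inversion (h : σ ≠ 1) :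
    ∃ i j : Fin a, i < j ∧ σ j < σ i := by
  have hne : (univ.filter fun i => σ i ≠ i).Nonempty := by
    by_contra hc
    rw [Finset.not_nonempty_iff_eq_empty, Finset.filter_eq_empty_iff] at hc
    exact h (Equiv.ext fun i => by simpa using hc (mem_univ i))
  set i₀ := (univ.filter fun i => σ i ≠ i).min' hne with hi₀
  have hmem : i₀ ∈ univ.filter fun i => σ i ≠ i := Finset.min'_mem _ hne
  have hii : σ i₀ ≠ i₀ := (mem_filter.mp hmem).2
  have hfix : ∀ x, x < i₀ → σ x = x := by
    intro x hx
    by_contra hcon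
    exact absurd (Finset.min'_le _ x (mem_filter.mpr ⟨mem_univ _, hcon⟩)) (not_le.mpr hx)
  have hgt : i₀ < σ i₀ := by
    rcases lt_trichotomy (σ i₀) i₀ with h1 | h1 | h1
    · exact absurd (σ.injective (hfix (σ i₀) h1)) hii
    · exact absurd h1 hii
    · exact h1
  refine ⟨i₀, σ⁻¹ i₀, ?_, ?_⟩
  · rcases lt_trichotomy (σ⁻¹ i₀) i₀ with h1 | h1 | h1
    · have h2 := hfix _ h1
      rw [show σ (σ⁻¹ i₀) = i₀ from σ.apply_symm_apply i₀] at h2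
      rw [← h2] at h1
      exact absurd h1 (lt_irrefl _)
    · exfalso
      have h2 := congrArg σ h1
      rw [show σ (σ⁻¹ i₀) = i₀ from σ.apply_symm_apply i₀] at h2
      exact hii h2.symm
    · exact h1
  · rw [show σ (σ⁻¹ i₀) = i₀ from σ.apply_symm_apply i₀]
    exact hgt

lemma cnt_g_eq_content (w : Fin g → Fin a) (i : Fin a) : cnt w g i = content w i := by
  unfold cnt content
  congr 1
  apply Finset.filter_congr
  intro s _
  have := s.isLt
  constructor
  · rintro ⟨_, h2⟩
    exact h2
  · intro h2
    exact ⟨by omega, h2⟩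

lemma perm_eq_one_of_good (hE : Econd b σ w) (hg : Good σ w) : σ = 1 := by
  by_contra hne
  obtain ⟨i, j, hij, hinv⟩ := exists_inversion hne
  have hvij : (i : ℕ) < (j : ℕ) := hij
  have hvinv : ((σ j : Fin a) : ℕ) < ((σ i : Fin a) : ℕ) := hinv
  have h0 : pos σ w 0 i < pos σ w 0 j := by
    unfold pos
    rw [cnt_zero, cnt_zero]
    push_cast
    omega
  have hend := pos_order hg h0 g le_rfl
  have hei := hE i
  have hej := hE j
  unfold pos at hend
  rw [cnt_g_eq_content, cnt_g_eq_content] at hend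
  push_cast at *
  omega

end Order

section Main

variable {b : ℕ}

lemma signed_sum (a b g : ℕ) [DecidablePred fun p : Equiv.Perm (Fin a) × (Fin g → Fin a) =>
      Econd b p.1 p.2]
    [DecidablePred fun p : Equiv.Perm (Fin a) × (Fin g → Fin a) => Good p.1 p.2]
    [DecidablePred fun w : Fin g → Fin a => Econd b 1 w ∧ Good 1 w] :
    ∑ p ∈ (univ : Finset (Equiv.Perm (Fin a) × (Fin g → Fin a))).filter
        (fun p => Econd b p.1 p.2),
      ((Equiv.Perm.sign p.1 : ℤˣ) : ℤ)
    = ((univ.filter fun w : Fin g → Fin a => Econd b 1 w ∧ Good 1 w).card : ℤ) := by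
  classical
  rw [← Finset.sum_filter_add_sum_filter_not
    ((univ : Finset (Equiv.Perm (Fin a) × (Fin g → Fin a))).filter (fun p => Econd b p.1 p.2))
    (fun p => Good p.1 p.2)]
  have hbadsum : ∑ p ∈ ((univ : Finset (Equiv.Perm (Fin a) × (Fin g → Fin a))).filter
      (fun p => Econd b p.1 p.2)).filter (fun p => ¬ Good p.1 p.2),
      ((Equiv.Perm.sign p.1 : ℤˣ) : ℤ) = 0 := by
    have hbp : ∀ p : Equiv.Perm (Fin a) × (Fin g → Fin a),
        p ∈ ((univ : Finset (Equiv.Perm (Fin a) × (Fin g → Fin a))).filter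
          (fun p => Econd b p.1 p.2)).filter (fun p => ¬ Good p.1 p.2) → ¬ Good p.1 p.2 :=
      fun p hp => (mem_filter.mp hp).2
    refine Finset.sum_involution
      (fun p hp => (p.1 * fTau (hbp p hp), reflW (fTau (hbp p hp)) (fT p.1 p.2) p.2))
      ?_ ?_ ?_ ?_
    · intro p hp
      have hne : fK (hbp p hp) ≠ fJ (hbp p hp) := fun hc => (fJ_spec (hbp p hp)).1 hc.symm
      show ((Equiv.Perm.sign p.1 : ℤˣ) : ℤ) + ((Equiv.Perm.sign (p.1 * fTau (hbp p hp)) : ℤˣ) : ℤ) = 0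
      rw [Equiv.Perm.sign_mul]
      unfold fTau
      rw [Equiv.Perm.sign_swap hne]
      simp
    · intro p hp _
      intro hc
      have h1 : p.1 * fTau (hbp p hp) = p.1 := congrArg Prod.fst hc
      have h2 : fTau (hbp p hp) = 1 := by
        have h1' : p.1 * fTau (hbp p hp) = p.1 * 1 := by rw [mul_one]; exact h1
        exact mul_left_cancel h1'
      have h3 : fTau (hbp p hp) (fK (hbp p hp)) = fK (hbp p hp) := by rw [h2]; rfl
      rw [fTau_apply_K] at h3
      exact (fJ_spec (hbp p hp)).1 h3
    · intro p hp
      rw [mem_filter]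
      constructor
      · rw [mem_filter]
        exact ⟨mem_univ _, Econd_reflW (mem_filter.mp (mem_filter.mp hp).1).2 (hbp p hp)⟩
      · exact bad_reflW (hbp p hp)
    · intro p hp
      have hbad := hbp p hp
      refine Prod.ext ?_ ?_
      · exact perm_reflW hbad
      · exact word_reflW hbad
  rw [hbadsum, add_zero]
  have hgood_eq : ((univ : Finset (Equiv.Perm (Fin a) × (Fin g → Fin a))).filter
      (fun p => Econd b p.1 p.2)).filter (fun p => Good p.1 p.2)
      = (univ.filter fun w : Fin g → Fin a => Econd b 1 w ∧ Good 1 w).image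
          (fun w => ((1 : Equiv.Perm (Fin a)), w)) := by
    ext p
    simp only [mem_filter, mem_univ, true_and, Finset.mem_image]
    constructor
    · rintro ⟨hE, hG⟩
      have h1 : p.1 = 1 := perm_eq_one_of_good hE hG
      exact ⟨p.2, ⟨by rw [← h1]; exact hE, by rw [← h1]; exact hG⟩, by
        rw [← h1]⟩
    · rintro ⟨w, ⟨hE, hG⟩, hw⟩
      rw [← hw]
      exact ⟨hE, hG⟩
  rw [hgood_eq, Finset.sum_image (by intro x _ y _ h; exact (Prod.ext_iff.mp h).2)]
  simp

end Main

section WordCount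

variable {a n g : ℕ}

lemma content_eq_sum (w : Fin n → Fin a) (i : Fin a) :
    content w i = ∑ s, if w s = i then 1 else 0 := by
  rw [content, Finset.card_filter]

lemma sum_content (w : Fin n → Fin a) : ∑ i, content w i = n := by
  classical
  have : ∑ i, content w i = (univ : Finset (Fin n)).card := by
    rw [Finset.card_eq_sum_card_fiberwise (f := w) (t := univ) (fun x _ => mem_univ _)]
    rfl
  simpa using this

lemma content_cons (i : Fin a) (w : Fin n → Fin a) (j : Fin a) :
    content (Fin.cons i w) j = content w j + if i = j then 1 else 0 := by
  rw [content_eq_sum, content_eq_sum, Fin.sum_univ_succ]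
  simp [add_comm]

lemma card_words_mul : ∀ (n : ℕ) (μ : Fin a → ℕ), (∑ i, μ i = n) →
    Nat.card {w : Fin n → Fin a // content w = μ} * ∏ i, (μ i)! = n ! := by
  intro n
  induction n with
  | zero =>
    intro μ h
    have hμ : ∀ i, μ i = 0 := by
      intro i
      exact Finset.sum_eq_zero_iff.mp h i (mem_univ i)
    have hu : Nat.card {w : Fin 0 → Fin a // content w = μ} = 1 := by
      have : Unique {w : Fin 0 → Fin a // content w = μ} := by
        refine ⟨⟨⟨Fin.elim0, ?_⟩⟩, ?_⟩
        · funext i; rw [hμ i]; simp [content]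
        · rintro ⟨w, hw⟩
          ext s
          exact s.elim0
      exact Nat.card_unique
    rw [hu]
    simp [hμ]
  | succ n IH =>
    intro μ h
    classical
    -- decompose by first letter
    have key : Nat.card {w : Fin (n+1) → Fin a // content w = μ}
        = ∑ i : Fin a, Nat.card {w : Fin n → Fin a // content (Fin.cons i w) = μ} := by
      have hcw : ∀ p : Fin a × (Fin n → Fin a),
          (Fin.consEquiv fun _ => Fin a) p = Fin.cons p.1 p.2 := fun p => rfl
      have e1 : {w : Fin (n+1) → Fin a // content w = μ}
          ≃ {p : Fin a × (Fin n → Fin a) // content (Fin.cons p.1 p.2) = μ} := by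
        refine (Fin.consEquiv fun _ => Fin a).symm.subtypeEquiv ?_
        intro w
        rw [← hcw, Equiv.apply_symm_apply]
      have e2 : {p : Fin a × (Fin n → Fin a) // content (Fin.cons p.1 p.2) = μ}
          ≃ Σ i : Fin a, {w : Fin n → Fin a // content (Fin.cons i w) = μ} :=
        Equiv.subtypeProdEquivSigmaSubtype (fun i w => content (Fin.cons i w) = μ)
      rw [Nat.card_congr (e1.trans e2), Nat.card_eq_fintype_card, Fintype.card_sigma]
      simp [Nat.card_eq_fintype_card]
    have term : ∀ i : Fin a,
        Nat.card {w : Fin n → Fin a // content (Fin.cons i w) = μ} * ∏ j, (μ j)!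
          = n ! * μ i := by
      intro i
      rcases Nat.eq_zero_or_pos (μ i) with h0 | hpos
      · have : IsEmpty {w : Fin n → Fin a // content (Fin.cons i w) = μ} := by
          refine ⟨?_⟩
          rintro ⟨w, hw⟩
          have := congrFun hw i
          rw [content_cons] at this
          simp [h0] at this
        simp [Nat.card_of_isEmpty, h0]
      · set μ' := Function.update μ i (μ i - 1) with hμ'
        have hiff : ∀ w : Fin n → Fin a, content (Fin.cons i w) = μ ↔ content w = μ' := by
          intro w
          constructor
          · intro hw
            funext j
            have hj := congrFun hw j
            rw [content_cons] at hj
            by_cases hij : i = j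
            · subst hij
              simp at hj
              simp [hμ', Function.update_self]
              omega
            · simp only [if_neg hij] at hj
              simp [hμ', Function.update_of_ne (Ne.symm hij)]
              omega
          · intro hw
            funext j
            rw [content_cons, congrFun hw j]
            by_cases hij : i = j
            · subst hij
              simp [hμ', Function.update_self]
              omega
            · simp [hμ', hij, Function.update_of_ne (Ne.symm hij)]
        have hcard : Nat.card {w : Fin n → Fin a // content (Fin.cons i w) = μ}
            = Nat.card {w : Fin n → Fin a // content w = μ'} := by
          exact Nat.card_congr ((Equiv.refl _).subtypeEquiv (by simpa using hiff))
        have hsum : ∑ j, μ' j = n := by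
          have h1 : ∑ j, μ' j = (μ i - 1) + ∑ j ∈ univ.erase i, μ j := by
            rw [hμ']
            rw [← Finset.add_sum_erase _ _ (mem_univ i)]
            simp [Function.update_self]
            exact Finset.sum_congr rfl (fun j hj =>
              Function.update_of_ne (Finset.ne_of_mem_erase hj) _ _)
          have h2 : μ i + ∑ j ∈ univ.erase i, μ j = n + 1 := by
            rw [Finset.add_sum_erase _ _ (mem_univ i)]; exact h
          omega
        have hprod : ∏ j, (μ j)! = μ i * ∏ j, (μ' j)! := by
          rw [← Finset.prod_erase_mul _ _ (mem_univ i), ← Finset.prod_erase_mul _ _ (mem_univ i)]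
          have : ∏ j ∈ univ.erase i, (μ' j)! = ∏ j ∈ univ.erase i, (μ j)! :=
            Finset.prod_congr rfl (fun j hj => by
              rw [hμ', Function.update_of_ne (Finset.ne_of_mem_erase hj)])
          rw [this]
          simp only [hμ', Function.update_self]
          rw [← Nat.mul_factorial_pred hpos.ne']
          ring
        rw [hcard, hprod, ← mul_assoc, mul_comm _ (μ i), mul_comm (n !) (μ i), mul_assoc,
          IH μ' hsum]
    calc Nat.card {w : Fin (n+1) → Fin a // content w = μ} * ∏ j, (μ j)!
        = ∑ i : Fin a, (Nat.card {w : Fin n → Fin a // content (Fin.cons i w) = μ} * ∏ j, (μ j)!) := by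
          rw [key, Finset.sum_mul]
      _ = ∑ i : Fin a, n ! * μ i := Finset.sum_congr rfl (fun i _ => term i)
      _ = (n+1)! := by
          rw [← Finset.mul_sum, h, Nat.factorial_succ, mul_comm]

end WordCount

section Det


lemma inner_prod (a : ℕ) (j : Fin a) :
    ∏ i ∈ Iio j, (((j:ℕ) : ℤ) - ((i : Fin a) : ℕ)) = ((j:ℕ)! : ℤ) := by
  have h1 : ∏ i ∈ Iio j, (((j:ℕ) : ℤ) - ((i : Fin a) : ℕ))
      = ∏ m ∈ range (j:ℕ), (((j:ℕ) : ℤ) - (m:ℕ)) := by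
    refine Finset.prod_bij' (fun i _ => (i : ℕ))
      (fun m hm => (⟨m, lt_trans (mem_range.mp hm) j.isLt⟩ : Fin a)) ?_ ?_ ?_ ?_ ?_
    · intro i hi
      simpa using mem_Iio.mp hi
    · intro m hm
      simpa [Fin.lt_def] using mem_range.mp hm
    · intro i _
      rfl
    · intro m _
      rfl
    · intro i _
      rfl
  rw [h1]
  have h2 : ∀ m ∈ range (j:ℕ), (((j:ℕ) : ℤ) - (m:ℕ)) = (((j:ℕ) - m : ℕ) : ℤ) := by
    intro m hm
    rw [Nat.cast_sub (le_of_lt (mem_range.mp hm))]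
  rw [Finset.prod_congr rfl h2, ← Nat.cast_prod]
  congr 1
  rw [← Finset.prod_range_reflect]
  rw [← Finset.prod_range_add_one_eq_factorial]
  apply Finset.prod_congr rfl
  intro m hm
  have := mem_range.mp hm
  omega

lemma vandermonde_prod (a : ℕ) :
    (∏ i : Fin a, ∏ j ∈ Ioi i, (((j : Fin a) : ℤ) - ((i : Fin a) : ℕ))) = ∏ α ∈ range a, (α ! : ℤ) := by
  rw [Finset.prod_comm' (t' := univ) (s' := fun j => Iio j)
    (by intro x y; simp [mem_Ioi, mem_Iio, and_comm])]
  have : ∀ j : Fin a, ∏ i ∈ Iio j, (((j : Fin a) : ℤ) - ((i : Fin a) : ℕ)) = ((j:ℕ)! : ℤ) := by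
    intro j
    exact_mod_cast inner_prod a j
  rw [Finset.prod_congr rfl (fun j _ => this j)]
  rw [← Fin.prod_univ_eq_prod_range (fun α => ((α ! : ℕ) : ℤ)) a]

lemma det_desc (a b : ℕ) :
    (Matrix.of fun x i : Fin a => (((b + (x:ℕ)).descFactorial (i:ℕ) : ℕ) : ℤ)).det
      = ∏ α ∈ range a, (α ! : ℤ) := by
  have hdet := Matrix.det_eval_matrixOfPolynomials_eq_det_vandermonde
    (fun x : Fin a => ((b : ℤ) + (x:ℕ)))
    (fun i : Fin a => descPochhammer ℤ (i:ℕ))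
    (fun i => descPochhammer_natDegree ℤ (i:ℕ))
    (fun i => monic_descPochhammer ℤ (i:ℕ))
  have hentry : (Matrix.of fun x i : Fin a =>
      Polynomial.eval ((b:ℤ) + (x:ℕ)) (descPochhammer ℤ (i:ℕ)))
      = (Matrix.of fun x i : Fin a => (((b + (x:ℕ)).descFactorial (i:ℕ) : ℕ) : ℤ)) := by
    ext x i
    simp only [Matrix.of_apply]
    rw [show ((b:ℤ) + (x:ℕ)) = ((b + (x:ℕ) : ℕ) : ℤ) by push_cast; ring]
    exact descPochhammer_eval_eq_descFactorial ℤ _ _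
  rw [hentry] at hdet
  rw [← hdet, Matrix.det_vandermonde]
  rw [← vandermonde_prod a]
  apply Finset.prod_congr rfl
  intro i _
  apply Finset.prod_congr rfl
  intro j _
  push_cast
  ring

end Det

section PerSigma

variable {b : ℕ}

lemma card_Econd_mul (a b g : ℕ) (hg : g = a * b) (σ : Equiv.Perm (Fin a))
    [DecidablePred fun w : Fin g → Fin a => Econd b σ w] :
    ((univ : Finset (Fin g → Fin a)).filter fun w => Econd b σ w).card
        * ∏ i : Fin a, (b + ((σ i : Fin a) : ℕ))!
      = g ! * ∏ i : Fin a, ((b + ((σ i : Fin a) : ℕ)).descFactorial (i : ℕ)) := by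
  by_cases hneg : ∀ i : Fin a, (i : ℕ) ≤ b + ((σ i : Fin a) : ℕ)
  · set μ : Fin a → ℕ := fun i => b + ((σ i : Fin a) : ℕ) - (i : ℕ) with hμ
    have hiff : ∀ w : Fin g → Fin a, Econd b σ w ↔ content w = μ := by
      intro w
      constructor
      · intro h
        funext i
        have h1 := h i
        have h2 := hneg i
        simp only [hμ]
        omega
      · intro h i
        rw [h]
        have h2 := hneg i
        simp only [hμ]
        push_cast
        omega
    have hsum : ∑ i, μ i = g := by
      have hz : ((∑ i, μ i : ℕ) : ℤ) = (g : ℤ) := by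
        push_cast
        have hc : ∀ i : Fin a, ((μ i : ℕ) : ℤ)
            = (b : ℤ) + ((σ i : Fin a) : ℕ) - ((i : Fin a) : ℕ) := by
          intro i
          simp only [hμ]
          have := hneg i
          push_cast
          omega
        rw [Finset.sum_congr rfl (fun i _ => hc i)]
        rw [Finset.sum_sub_distrib, Finset.sum_add_distrib]
        rw [Equiv.sum_comp σ (fun i : Fin a => ((i : ℕ) : ℤ))]
        simp only [Finset.sum_const, Finset.card_univ, Fintype.card_fin, nsmul_eq_mul]
        rw [hg]
        push_cast
        ring
      exact_mod_cast hz
    have hcard : ((univ : Finset (Fin g → Fin a)).filter fun w => Econd b σ w).card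
        = Nat.card {w : Fin g → Fin a // content w = μ} := by
      classical
      rw [Nat.card_eq_fintype_card, Fintype.card_subtype]
      apply Finset.card_bij (fun w _ => w)
      · intro w hw
        rw [mem_filter] at hw ⊢
        exact ⟨mem_univ _, (hiff w).mp hw.2⟩
      · intro w w' _ _ h
        exact h
      · intro w hw
        rw [mem_filter] at hw
        exact ⟨w, mem_filter.mpr ⟨mem_univ _, (hiff w).mpr hw.2⟩, rfl⟩
    have hfact : ∀ i : Fin a, (b + ((σ i : Fin a) : ℕ))!
        = ((b + ((σ i : Fin a) : ℕ)).descFactorial (i : ℕ)) * (μ i)! := by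
      intro i
      have h := Nat.factorial_mul_descFactorial (hneg i)
      simp only [hμ]
      rw [← h, mul_comm]
    calc ((univ : Finset (Fin g → Fin a)).filter fun w => Econd b σ w).card
          * ∏ i : Fin a, (b + ((σ i : Fin a) : ℕ))!
        = ((univ : Finset (Fin g → Fin a)).filter fun w => Econd b σ w).card
          * ((∏ i : Fin a, ((b + ((σ i : Fin a) : ℕ)).descFactorial (i : ℕ)))
              * ∏ i : Fin a, (μ i)!) := by
          rw [Finset.prod_congr rfl (fun i _ => hfact i), Finset.prod_mul_distrib]
      _ = (Nat.card {w : Fin g → Fin a // content w = μ} * ∏ i : Fin a, (μ i)!)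
          * ∏ i : Fin a, ((b + ((σ i : Fin a) : ℕ)).descFactorial (i : ℕ)) := by
          rw [hcard]; ring
      _ = g ! * ∏ i : Fin a, ((b + ((σ i : Fin a) : ℕ)).descFactorial (i : ℕ)) := by
          rw [card_words_mul g μ hsum]
  · push_neg at hneg
    obtain ⟨i0, hi0⟩ := hneg
    have hcard0 : ((univ : Finset (Fin g → Fin a)).filter fun w => Econd b σ w).card = 0 := by
      rw [Finset.card_eq_zero, Finset.filter_eq_empty_iff]
      intro w _
      intro hE
      have h1 := hE i0
      have h2 : (0 : ℤ) ≤ (content w i0 : ℤ) := Int.ofNat_nonneg _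
      omega
    have hdesc0 : ∏ i : Fin a, ((b + ((σ i : Fin a) : ℕ)).descFactorial (i : ℕ)) = 0 :=
      Finset.prod_eq_zero (mem_univ i0) (Nat.descFactorial_eq_zero_iff_lt.mpr hi0)
    rw [hcard0, hdesc0]
    simp

lemma prod_reindex (a b : ℕ) (σ : Equiv.Perm (Fin a)) :
    ∏ i : Fin a, (b + ((σ i : Fin a) : ℕ))! = ∏ α ∈ range a, (b + α)! := by
  rw [Equiv.prod_comp σ (fun i : Fin a => (b + (i : ℕ))!)]
  exact Fin.prod_univ_eq_prod_range (fun α => (b + α)!) a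

theorem words_count (a b g : ℕ) (hg : g = a * b)
    [DecidablePred fun w : Fin g → Fin a => Econd b 1 w ∧ Good 1 w] :
    ((univ : Finset (Fin g → Fin a)).filter fun w => Econd b 1 w ∧ Good 1 w).card
      * ∏ α ∈ range a, (b + α)! = g ! * ∏ α ∈ range a, α ! := by
  classical
  have hZ : (((univ : Finset (Fin g → Fin a)).filter fun w => Econd b 1 w ∧ Good 1 w).card : ℤ)
      * ((∏ α ∈ range a, (b + α)! : ℕ) : ℤ)
      = ((g ! : ℕ) : ℤ) * ((∏ α ∈ range a, α ! : ℕ) : ℤ) := by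
    have hss := signed_sum a b g
    have hP : ∀ σ : Equiv.Perm (Fin a),
        (((univ : Finset (Fin g → Fin a)).filter fun w => Econd b σ w).card : ℤ)
          * ((∏ α ∈ range a, (b + α)! : ℕ) : ℤ)
        = ((g ! : ℕ) : ℤ)
          * ((∏ i : Fin a, ((b + ((σ i : Fin a) : ℕ)).descFactorial (i : ℕ)) : ℕ) : ℤ) := by
      intro σ
      rw [← prod_reindex a b σ]
      exact_mod_cast congrArg (Nat.cast (R := ℤ)) (card_Econd_mul a b g hg σ)
    rw [← hss, Finset.sum_mul]
    trans (∑ σ : Equiv.Perm (Fin a), ∑ w : Fin g → Fin a,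
      (if Econd b σ w then ((Equiv.Perm.sign σ : ℤˣ) : ℤ)
        * ((∏ α ∈ range a, (b + α)! : ℕ) : ℤ) else 0))
    · rw [Finset.sum_filter, Fintype.sum_prod_type]
    trans (∑ σ : Equiv.Perm (Fin a),
      ((g ! : ℕ) : ℤ) * (((Equiv.Perm.sign σ : ℤˣ) : ℤ)
        * ∏ i : Fin a, (((b + ((σ i : Fin a) : ℕ)).descFactorial (i : ℕ) : ℕ) : ℤ)))
    · apply Finset.sum_congr rfl
      intro σ _
      rw [← Finset.sum_filter, Finset.sum_const, nsmul_eq_mul]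
      calc (((univ : Finset (Fin g → Fin a)).filter fun w => Econd b σ w).card : ℤ)
            * (((Equiv.Perm.sign σ : ℤˣ) : ℤ) * ((∏ α ∈ range a, (b + α)! : ℕ) : ℤ))
          = ((Equiv.Perm.sign σ : ℤˣ) : ℤ)
            * ((((univ : Finset (Fin g → Fin a)).filter fun w => Econd b σ w).card : ℤ)
              * ((∏ α ∈ range a, (b + α)! : ℕ) : ℤ)) := by ring
        _ = ((Equiv.Perm.sign σ : ℤˣ) : ℤ) * (((g ! : ℕ) : ℤ)
            * ((∏ i : Fin a, ((b + ((σ i : Fin a) : ℕ)).descFactorial (i : ℕ)) : ℕ) : ℤ)) := by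
            rw [hP σ]
        _ = ((g ! : ℕ) : ℤ) * (((Equiv.Perm.sign σ : ℤˣ) : ℤ)
            * ∏ i : Fin a, (((b + ((σ i : Fin a) : ℕ)).descFactorial (i : ℕ) : ℕ) : ℤ)) := by
            rw [Nat.cast_prod]
            ring
    rw [← Finset.mul_sum]
    congr 1
    have hdet : ∑ σ : Equiv.Perm (Fin a), ((Equiv.Perm.sign σ : ℤˣ) : ℤ)
          * ∏ i : Fin a, (((b + ((σ i : Fin a) : ℕ)).descFactorial (i : ℕ) : ℕ) : ℤ)
        = (Matrix.of fun x i : Fin a => (((b + (x:ℕ)).descFactorial (i:ℕ) : ℕ) : ℤ)).det := by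
      rw [Matrix.det_apply]
      apply Finset.sum_congr rfl
      intro σ _
      rw [Units.smul_def, zsmul_eq_mul]
      rfl
    rw [hdet, det_desc a b, Nat.cast_prod]
  exact_mod_cast hZ

end PerSigma

section Bij

variable {a b g : ℕ}

lemma Econd_one_iff {w : Fin g → Fin a} {b : ℕ} :
    Econd b (1 : Equiv.Perm (Fin a)) w ↔ ∀ i, content w i = b := by
  unfold Econd
  constructor
  · intro h i
    have h1 := h i
    simp only [Equiv.Perm.one_apply] at h1
    omega
  · intro h i
    rw [h i]
    simp [Equiv.Perm.one_apply]

lemma card_filter_lt_fin (b : ℕ) (j : Fin b) :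
    ((univ : Finset (Fin b)).filter fun m => m < j).card = (j : ℕ) := by
  have h : (univ : Finset (Fin b)).filter (fun m => m < j) = Iio j := by
    ext m
    simp [mem_Iio]
  rw [h, Fin.card_Iio]

lemma card_filter_le_fin (b : ℕ) (j : Fin b) :
    ((univ : Finset (Fin b)).filter fun m => m ≤ j).card = (j : ℕ) + 1 := by
  have h : (univ : Finset (Fin b)).filter (fun m => m ≤ j) = Iic j := by
    ext m
    simp [mem_Iic]
  rw [h, Fin.card_Iic]

lemma cnt_eq_card_emb {w : Fin g → Fin a} {i : Fin a}
    (hb : ((univ : Finset (Fin g)).filter fun s => w s = i).card = b) (t : ℕ) :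
    cnt w t i = ((univ : Finset (Fin b)).filter fun m =>
      ((((univ : Finset (Fin g)).filter fun s => w s = i).orderEmbOfFin hb m : Fin g)).val
        < t).card := by
  classical
  symm
  unfold cnt
  apply Finset.card_bij
    (fun m _ => ((univ : Finset (Fin g)).filter fun s => w s = i).orderEmbOfFin hb m)
  · intro m hm
    rw [mem_filter] at hm ⊢
    refine ⟨mem_univ _, hm.2, ?_⟩
    have := Finset.orderEmbOfFin_mem ((univ : Finset (Fin g)).filter fun s => w s = i) hb m
    exact (mem_filter.mp this).2
  · intro m1 _ m2 _ h
    exact (((univ : Finset (Fin g)).filter fun s => w s = i).orderEmbOfFin hb).injective h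
  · intro s hs
    rw [mem_filter] at hs
    have hmem : s ∈ (univ : Finset (Fin g)).filter fun s => w s = i :=
      mem_filter.mpr ⟨mem_univ _, hs.2.2⟩
    have hrange := Finset.range_orderEmbOfFin
      ((univ : Finset (Fin g)).filter fun s => w s = i) hb
    have : s ∈ Set.range (((univ : Finset (Fin g)).filter fun s => w s = i).orderEmbOfFin hb) := by
      rw [hrange]
      exact_mod_cast hmem
    obtain ⟨m, hm⟩ := this
    exact ⟨m, mem_filter.mpr ⟨mem_univ _, by rw [hm]; exact hs.2.1⟩, hm⟩

lemma good_of_cnt_anti {w : Fin g → Fin a}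
    (h : ∀ t ≤ g, ∀ i i' : Fin a, i < i' → cnt w t i' ≤ cnt w t i) :
    Good (1 : Equiv.Perm (Fin a)) w := by
  intro t x y hxy
  by_contra hne
  have key : ∀ x y : Fin a, x < y → False → True := fun _ _ _ _ => trivial
  have hmain : ∀ x y : Fin a, x < y →
      pos (1 : Equiv.Perm (Fin a)) w t.val x = pos (1 : Equiv.Perm (Fin a)) w t.val y → False := by
    intro x y hlt heq
    have hc := h t.val (by omega) x y hlt
    unfold pos at heq
    simp only [Equiv.Perm.one_apply] at heq
    have hv : (x : ℕ) < (y : ℕ) := hlt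
    omega
  rcases lt_or_gt_of_ne hne with hlt | hlt
  · exact hmain x y hlt hxy
  · exact hmain y x hlt hxy.symm

lemma cnt_anti_aux {w : Fin g → Fin a} (hG : Good (1 : Equiv.Perm (Fin a)) w) :
    ∀ d (i i' : Fin a), (i : ℕ) + d = (i' : ℕ) → ∀ t ≤ g, cnt w t i' ≤ cnt w t i := by
  intro d
  induction d with
  | zero =>
    intro i i' h t ht
    have : i = i' := Fin.ext (by omega)
    rw [this]
  | succ d IH =>
    intro i i' h t ht
    have hmidlt : (i' : ℕ) - 1 < a := by have := i'.isLt; omega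
    set mid : Fin a := ⟨(i' : ℕ) - 1, hmidlt⟩ with hmid
    have hvm : (mid : ℕ) = (i' : ℕ) - 1 := rfl
    have h0 : pos (1 : Equiv.Perm (Fin a)) w 0 i' < pos (1 : Equiv.Perm (Fin a)) w 0 mid := by
      unfold pos
      rw [cnt_zero, cnt_zero]
      simp only [Equiv.Perm.one_apply]
      have : (1:ℕ) ≤ (i' : ℕ) := by omega
      push_cast
      omega
    have hstep := pos_order hG h0 t ht
    unfold pos at hstep
    simp only [Equiv.Perm.one_apply] at hstep
    have hres : cnt w t i' ≤ cnt w t mid := by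
      have h1 : (1:ℕ) ≤ (i' : ℕ) := by omega
      push_cast at hstep
      omega
    exact le_trans hres (IH i mid (by omega) t ht)

lemma cnt_anti_of_good {w : Fin g → Fin a} (hG : Good (1 : Equiv.Perm (Fin a)) w)
    {i i' : Fin a} (hii : i ≤ i') {t : ℕ} (ht : t ≤ g) : cnt w t i' ≤ cnt w t i := by
  have hv : (i : ℕ) ≤ (i' : ℕ) := hii
  exact cnt_anti_aux hG ((i' : ℕ) - (i : ℕ)) i i' (by omega) t ht

end Bij

section BijMain

variable {a b g : ℕ}

lemma cnt_wd (f : Fin a × Fin b → Fin g) (hbij : Function.Bijective f) (t : ℕ) (i : Fin a) :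
    cnt (fun s => (Fintype.bijInv hbij s).1) t i
      = ((univ : Finset (Fin b)).filter fun j => (f (i, j)).val < t).card := by
  classical
  symm
  unfold cnt
  apply Finset.card_bij (fun j _ => f (i, j))
  · intro j hj
    rw [mem_filter] at hj ⊢
    refine ⟨mem_univ _, hj.2, ?_⟩
    show (Fintype.bijInv hbij (f (i, j))).1 = i
    rw [Fintype.leftInverse_bijInv hbij (i, j)]
  · intro j1 _ j2 _ h
    have h2 := hbij.1 h
    exact (Prod.ext_iff.mp h2).2
  · intro s hs
    rw [mem_filter] at hs
    have hps : f (Fintype.bijInv hbij s) = s := Fintype.rightInverse_bijInv hbij s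
    have hpair : ((i, (Fintype.bijInv hbij s).2) : Fin a × Fin b) = Fintype.bijInv hbij s :=
      Prod.ext hs.2.2.symm rfl
    refine ⟨(Fintype.bijInv hbij s).2, ?_, ?_⟩
    · rw [mem_filter]
      refine ⟨mem_univ _, ?_⟩
      rw [hpair, hps]
      exact hs.2.1
    · rw [hpair, hps]

lemma wd_mem (f : Fin a × Fin b → Fin g) (hbij : Function.Bijective f)
    (hrow : ∀ (i i' : Fin a) (j : Fin b), i < i' → f (i, j) < f (i', j)) :
    Econd b (1 : Equiv.Perm (Fin a)) (fun s => (Fintype.bijInv hbij s).1)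
      ∧ Good (1 : Equiv.Perm (Fin a)) (fun s => (Fintype.bijInv hbij s).1) := by
  classical
  constructor
  · rw [Econd_one_iff]
    intro i
    rw [← cnt_g_eq_content, cnt_wd f hbij g i]
    have h : (univ : Finset (Fin b)).filter (fun j => (f (i, j)).val < g) = univ := by
      apply Finset.filter_true_of_mem
      intro j _
      exact (f (i, j)).isLt
    rw [h]
    simp
  · apply good_of_cnt_anti
    intro t ht i i' hii
    rw [cnt_wd f hbij t i, cnt_wd f hbij t i']
    apply Finset.card_le_card
    intro j hj
    rw [mem_filter] at hj ⊢
    refine ⟨hj.1, ?_⟩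
    have h1 := hrow i i' j hii
    have hv : (f (i, j)).val < (f (i', j)).val := h1
    omega

def tbF (w : Fin g → Fin a) (h : ∀ i, content w i = b) : Fin a × Fin b → Fin g :=
  fun p => ((univ : Finset (Fin g)).filter fun s => w s = p.1).orderEmbOfFin
    (show ((univ : Finset (Fin g)).filter fun s => w s = p.1).card = b from h p.1) p.2

lemma w_tbF (w : Fin g → Fin a) (h : ∀ i, content w i = b) (p : Fin a × Fin b) :
    w (tbF w h p) = p.1 := by
  have hmem := Finset.orderEmbOfFin_mem ((univ : Finset (Fin g)).filter fun s => w s = p.1)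
    (show ((univ : Finset (Fin g)).filter fun s => w s = p.1).card = b from h p.1) p.2
  exact (mem_filter.mp hmem).2

lemma tbF_col (w : Fin g → Fin a) (h : ∀ i, content w i = b) (i : Fin a)
    {j j' : Fin b} (hjj : j < j') : tbF w h (i, j) < tbF w h (i, j') := by
  exact (Finset.orderEmbOfFin _ _).strictMono hjj

lemma tbF_cnt_succ (w : Fin g → Fin a) (h : ∀ i, content w i = b) (i : Fin a) (j : Fin b) :
    cnt w ((tbF w h (i, j)).val + 1) i = (j : ℕ) + 1 := by
  classical
  have hbb : ((univ : Finset (Fin g)).filter fun s => w s = i).card = b := h i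
  have hE : tbF w h (i, j)
      = ((univ : Finset (Fin g)).filter fun s => w s = i).orderEmbOfFin hbb j := rfl
  rw [cnt_eq_card_emb hbb]
  have hcongr : ∀ m : Fin b,
      ((((univ : Finset (Fin g)).filter fun s => w s = i).orderEmbOfFin hbb m)).val
        < (tbF w h (i, j)).val + 1 ↔ m ≤ j := by
    intro m
    rw [hE, Nat.lt_succ_iff]
    constructor
    · intro hle
      by_contra hc
      push_neg at hc
      have hmono := (((univ : Finset (Fin g)).filter fun s => w s = i).orderEmbOfFin
        hbb).strictMono hc
      have hv : ((((univ : Finset (Fin g)).filter fun s => w s = i).orderEmbOfFin hbb j)).val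
          < ((((univ : Finset (Fin g)).filter fun s => w s = i).orderEmbOfFin hbb m)).val :=
        hmono
      omega
    · intro hle
      exact (((univ : Finset (Fin g)).filter fun s => w s = i).orderEmbOfFin
        hbb).le_iff_le.mpr hle
  rw [Finset.filter_congr (fun m _ => by rw [hcongr m])]
  exact card_filter_le_fin b j

lemma tbF_row (w : Fin g → Fin a) (h : ∀ i, content w i = b)
    (hG : Good (1 : Equiv.Perm (Fin a)) w)
    {i i' : Fin a} (hii : i < i') (j : Fin b) : tbF w h (i, j) < tbF w h (i', j) := by
  classical
  have hbb : ((univ : Finset (Fin g)).filter fun s => w s = i).card = b := h i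
  set t := (tbF w h (i', j)).val with hts
  have h1 : cnt w (t + 1) i' = (j : ℕ) + 1 := tbF_cnt_succ w h i' j
  have ht1 : t + 1 ≤ g := (tbF w h (i', j)).isLt
  have h2 : (j : ℕ) + 1 ≤ cnt w (t + 1) i := by
    rw [← h1]
    exact cnt_anti_of_good hG (le_of_lt hii) ht1
  have hlt : (tbF w h (i, j)).val < t + 1 := by
    by_contra hc
    push_neg at hc
    have hsub : ((univ : Finset (Fin b)).filter fun m =>
        ((((univ : Finset (Fin g)).filter fun s => w s = i).orderEmbOfFin hbb m)).val < t + 1)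
        ⊆ (univ : Finset (Fin b)).filter fun m => m < j := by
      intro m hm
      rw [mem_filter] at hm ⊢
      refine ⟨mem_univ _, ?_⟩
      by_contra hmc
      push_neg at hmc
      have hmono := (((univ : Finset (Fin g)).filter fun s => w s = i).orderEmbOfFin
        hbb).le_iff_le.mpr hmc
      have hv : (tbF w h (i, j)).val
          ≤ ((((univ : Finset (Fin g)).filter fun s => w s = i).orderEmbOfFin hbb m)).val :=
        hmono
      omega
    have hcard := Finset.card_le_card hsub
    rw [card_filter_lt_fin b j] at hcard
    rw [cnt_eq_card_emb hbb] at h2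
    omega
  have hne : (tbF w h (i, j)).val ≠ t := by
    intro hc
    have heq : tbF w h (i, j) = tbF w h (i', j) := Fin.ext (by rw [hc])
    have hwi := w_tbF w h (i, j)
    have hwi' := w_tbF w h (i', j)
    rw [heq, hwi'] at hwi
    exact (_root_.ne_of_lt hii) hwi.symm
  have hfin : (tbF w h (i, j)).val < t := by omega
  exact hfin

lemma tbF_bijective (hg : g = a * b) (w : Fin g → Fin a) (h : ∀ i, content w i = b) :
    Function.Bijective (tbF w h) := by
  rw [Fintype.bijective_iff_injective_and_card]
  constructor
  · rintro ⟨p1, p2⟩ ⟨q1, q2⟩ hpq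
    have h1 : p1 = q1 := by
      have hw := w_tbF w h (p1, p2)
      rw [hpq, w_tbF w h (q1, q2)] at hw
      exact hw.symm
    subst h1
    have h2 : p2 = q2 := (Finset.orderEmbOfFin _ _).injective hpq
    rw [h2]
  · simp [hg]

end BijMain

section Final

variable {a b g : ℕ}

lemma wd_tbF (w : Fin g → Fin a) (h : ∀ i, content w i = b)
    (hbij : Function.Bijective (tbF w h)) (t : Fin g) :
    (Fintype.bijInv hbij t).1 = w t := by
  have hq : tbF w h (Fintype.bijInv hbij t) = t := Fintype.rightInverse_bijInv hbij t
  have hw := w_tbF w h (Fintype.bijInv hbij t)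
  rw [hq] at hw
  exact hw.symm

lemma tbF_wd (f : Fin a × Fin b → Fin g) (hbij : Function.Bijective f)
    (hcol : ∀ (i : Fin a) (j j' : Fin b), j < j' → f (i, j) < f (i, j'))
    (h : ∀ i, content (fun s => (Fintype.bijInv hbij s).1) i = b) :
    tbF (fun s => (Fintype.bijInv hbij s).1) h = f := by
  funext p
  obtain ⟨i, j⟩ := p
  have hfs : ∀ x : Fin b, f (i, x) ∈ (univ : Finset (Fin g)).filter
      (fun s => (Fintype.bijInv hbij s).1 = i) := by
    intro x
    rw [mem_filter]
    refine ⟨mem_univ _, ?_⟩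
    rw [Fintype.leftInverse_bijInv hbij (i, x)]
  have hmono : StrictMono (fun x : Fin b => f (i, x)) := fun x y hxy => hcol i x y hxy
  exact (congrFun (Finset.orderEmbOfFin_unique _ hfs hmono) j).symm

lemma card_syt_eq (a b g : ℕ) (hg : g = a * b)
    [DecidablePred fun w : Fin g → Fin a =>
      Econd b (1 : Equiv.Perm (Fin a)) w ∧ Good (1 : Equiv.Perm (Fin a)) w] :
    Nat.card {f : Fin a × Fin b → Fin g //
        Function.Bijective f ∧
        (∀ (i i' : Fin a) (j : Fin b), i < i' → f (i, j) < f (i', j)) ∧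
        (∀ (i : Fin a) (j j' : Fin b), j < j' → f (i, j) < f (i, j'))}
      = ((univ : Finset (Fin g → Fin a)).filter
          fun w => Econd b (1 : Equiv.Perm (Fin a)) w ∧ Good (1 : Equiv.Perm (Fin a)) w).card := by
  classical
  rw [Nat.card_eq_fintype_card, Fintype.card_subtype]
  apply Finset.card_bij'
    (i := fun f hf => fun s => (Fintype.bijInv (mem_filter.mp hf).2.1 s).1)
    (j := fun w hw => tbF w (Econd_one_iff.mp (mem_filter.mp hw).2.1))
  case hi =>
    intro f hf
    rw [mem_filter]
    obtain ⟨hbij, hrow, hcol⟩ := (mem_filter.mp hf).2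
    exact ⟨mem_univ _, wd_mem f hbij hrow⟩
  case hj =>
    intro w hw
    rw [mem_filter]
    have hcont := Econd_one_iff.mp (mem_filter.mp hw).2.1
    have hG := (mem_filter.mp hw).2.2
    refine ⟨mem_univ _, tbF_bijective hg w hcont, ?_, ?_⟩
    · intro i i' j hii
      exact tbF_row w hcont hG hii j
    · intro i j j' hjj
      exact tbF_col w hcont i hjj
  case left_inv =>
    intro f hf
    obtain ⟨hbij, hrow, hcol⟩ := (mem_filter.mp hf).2
    exact tbF_wd f _ hcol _
  case right_inv =>
    intro w hw
    funext t
    exact wd_tbF w _ _ t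

end Final

end SYTAux

/-- The number of standard Young tableaux on the `a × b` rectangle (encoded as bijections
`Fin a × Fin b → Fin g`, `g = a·b`, strictly increasing in each coordinate) satisfies the
hook-length-type identity `|T| · ∏_{α<a} (b+α)! = g! · ∏_{α<a} α!`. -/
theorem card_rectangular_SYT (a b : ℕ) (ha : 1 ≤ a) (hb : 1 ≤ b)
    (g : ℕ) (hg : g = a * b) :
    Nat.card {f : Fin a × Fin b → Fin g //
        Function.Bijective f ∧
        (∀ (i i' : Fin a) (j : Fin b), i < i' → f (i, j) < f (i', j)) ∧
        (∀ (i : Fin a) (j j' : Fin b), j < j' → f (i, j) < f (i, j'))} *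
      ∏ α ∈ Finset.range a, Nat.factorial (b + α) =
    Nat.factorial g * ∏ α ∈ Finset.range a, Nat.factorial α := by
  classical
  rw [SYTAux.card_syt_eq a b g hg]
  exact SYTAux.words_count a b g hg
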